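/- Let E, A ∈ ℂ^{n×n}, B ∈ ℂ^{n×m}, C ∈ ℂ^{m×n}, D ∈ ℂ^{m×m}, and suppose X ∈ ℂ^{n×n} is a solution of the discrete-time impedance KYP inequality (d-iKYP). If z ∈ ℂ with |z| > 1 and x ∈ ℂ^n satisfy A x = z E x, then X (E x) = 0 and C x = 0. In particular, eigenvalues of the pair (E, A) of modulus greater than one are not poles of the transfer function C(zE − A)^{-1}B + D. -/

import Mathlib

open Matrix
open scoped ComplexOrder

/-- For a solution `X` of the discrete-time impedance KYP inequality (d-iKYP),
eigenvectors of the pencil `(E, A)` for eigenvalues of modulus greater than one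
satisfy `X (E x) = 0` and `C x = 0`; in particular such eigenvalues are not poles
of the transfer function. -/
theorem diKYP_eigenvalues_outside_disk
    (n m : ℕ)
    (E A X : Matrix (Fin n) (Fin n) ℂ)
    (B : Matrix (Fin n) (Fin m) ℂ)
    (C : Matrix (Fin m) (Fin n) ℂ)
    (D : Matrix (Fin m) (Fin m) ℂ)
    (hX : X.PosSemidef)
    (hKYP : (Matrix.fromBlocks
        (-(Aᴴ * X * A) + Eᴴ * X * E) (Cᴴ - Aᴴ * X * B)
        (C - Bᴴ * X * A) (D + Dᴴ - Bᴴ * X * B)).PosSemidef)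
    (z : ℂ) (hz : 1 < ‖z‖)
    (x : Fin n → ℂ) (hxe : A *ᵥ x = z • (E *ᵥ x)) :
    X *ᵥ (E *ᵥ x) = 0 ∧ C *ᵥ x = 0 := by
  set v : Fin n ⊕ Fin m → ℂ := Sum.elim x 0 with hv
  have hstarv : star v = Sum.elim (star x) 0 := by
    funext i; cases i <;> simp [hv]
  -- p = (Ex)* X (Ex)
  set p : ℂ := star (E *ᵥ x) ⬝ᵥ X *ᵥ (E *ᵥ x) with hp
  -- quadratic form of the KYP matrix at v
  have hAx : star x ⬝ᵥ (Aᴴ * X * A) *ᵥ x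
      = (starRingEnd ℂ z * z) * p := by
    rw [← mulVec_mulVec, ← mulVec_mulVec, dotProduct_mulVec, ← star_mulVec, hxe]
    simp [hp, mulVec_smul, dotProduct_smul, smul_dotProduct, mul_assoc,
      mul_comm, mul_left_comm]
  have hEx : star x ⬝ᵥ (Eᴴ * X * E) *ᵥ x = p := by
    rw [← mulVec_mulVec, ← mulVec_mulVec, dotProduct_mulVec, ← star_mulVec]
  have hq : star v ⬝ᵥ (Matrix.fromBlocks
        (-(Aᴴ * X * A) + Eᴴ * X * E) (Cᴴ - Aᴴ * X * B)
        (C - Bᴴ * X * A) (D + Dᴴ - Bᴴ * X * B)) *ᵥ v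
      = p - (starRingEnd ℂ z * z) * p := by
    rw [hstarv, hv, fromBlocks_mulVec, sumElim_dotProduct_sumElim]
    simp only [Sum.elim_comp_inl, Sum.elim_comp_inr, mulVec_zero, add_zero, zero_dotProduct, add_zero, add_mulVec,
      neg_mulVec, dotProduct_add, dotProduct_neg, hAx, hEx]
    ring
  have hqpos := hKYP.dotProduct_mulVec_nonneg v
  rw [hq] at hqpos
  have hppos : 0 ≤ p := hX.dotProduct_mulVec_nonneg _
  -- show p = 0
  have hzz : (starRingEnd ℂ z * z) = ((‖z‖ : ℝ) ^ 2 : ℝ) := by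
    rw [← Complex.normSq_eq_conj_mul_self, ← Complex.sq_norm]
  have hpre : 0 ≤ p.re ∧ p.im = 0 := by
    rwa [Complex.le_def, Complex.zero_re, Complex.zero_im, eq_comm] at hppos
  have hqre : 0 ≤ (p - (starRingEnd ℂ z * z) * p).re := by
    rw [Complex.le_def] at hqpos
    exact hqpos.1
  have hp0 : p = 0 := by
    rw [hzz] at hqre
    have h1 : (1 : ℝ) < (‖z‖) ^ 2 := by nlinarith [norm_nonneg z]
    apply Complex.ext
    · simp only [Complex.sub_re, Complex.mul_re, Complex.ofReal_re, Complex.ofReal_im] at hqre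
      simp only [Complex.zero_re]
      nlinarith [hpre.1, hpre.2]
    · simp [hpre.2]
  have hXEx : X *ᵥ (E *ᵥ x) = 0 :=
    (hX.dotProduct_mulVec_zero_iff _).mp (by rw [← hp]; exact hp0)
  refine ⟨hXEx, ?_⟩
  have hq0 : star v ⬝ᵥ (Matrix.fromBlocks
        (-(Aᴴ * X * A) + Eᴴ * X * E) (Cᴴ - Aᴴ * X * B)
        (C - Bᴴ * X * A) (D + Dᴴ - Bᴴ * X * B)) *ᵥ v = 0 := by
    rw [hq, hp0]; ring
  have hMv := (hKYP.dotProduct_mulVec_zero_iff v).mp hq0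
  have hXAx : X *ᵥ (A *ᵥ x) = 0 := by
    rw [hxe, mulVec_smul, hXEx, smul_zero]
  have h2 : ((C - Bᴴ * X * A) *ᵥ x + (D + Dᴴ - Bᴴ * X * B) *ᵥ 0) = 0 := by
    funext i
    have := congrFun hMv (Sum.inr i)
    rw [hv, fromBlocks_mulVec] at this
    simpa using this
  rw [mulVec_zero, add_zero, sub_mulVec, ← mulVec_mulVec, ← mulVec_mulVec, hXAx,
    mulVec_zero, sub_zero] at h2
  exact h2
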